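/- For the ratio game V(x₁, x₂) = (x₁ᵀ R x₂)/(x₁ᵀ S x₂) with S = s ⊗ 1 (transitions depend only on player 1), if (x₁*, x₂*) is a Nash equilibrium (a saddle point of V over the product of simplices), then the generalized Minty property holds: ⟨x − x*, F(x) ∘ A(x) ∘ W(x*)⟩ ≥ 0 for all x, where F(x) = (∇_{x₁}V(x), −∇_{x₂}V(x)), A(x) = (x₁ᵀs · 1, 1) and W(x*) = ((1/(x₁*ᵀ s)) · 1, 1), and ∘ denotes the Hadamard product. -/

import Mathlib

open Finset

lemma sum_update_mul {n : ℕ} (f g : Fin n → ℝ) (i : Fin n) (t : ℝ) :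
    ∑ i', Function.update f i t i' * g i' = (∑ i', f i' * g i') + (t - f i) * g i := by
  rw [← Finset.add_sum_erase _ (fun i' => Function.update f i t i' * g i') (Finset.mem_univ i),
      ← Finset.add_sum_erase _ (fun i' => f i' * g i') (Finset.mem_univ i)]
  rw [Finset.sum_congr rfl (fun i' hi' => by
    rw [Function.update_of_ne (Finset.ne_of_mem_erase hi')])]
  simp [Function.update_self]
  ring

/-- Ratio game value with single controller (player 1): `V(x₁,x₂) = (x₁ᵀ R x₂)/(x₁ᵀ s)`. -/
noncomputable def scRatioV {n₁ n₂ : ℕ} (R : Fin n₁ → Fin n₂ → ℝ) (svec : Fin n₁ → ℝ)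
    (x₁ : Fin n₁ → ℝ) (x₂ : Fin n₂ → ℝ) : ℝ :=
  (∑ i, ∑ j, x₁ i * R i j * x₂ j) / (∑ i, x₁ i * svec i)

/-- If `(x₁*, x₂*)` is a saddle point (Nash equilibrium) of the single-controller ratio game,
then the generalized Minty property `⟨x − x*, F(x) ∘ A(x) ∘ W(x*)⟩ ≥ 0` holds, where
`F(x) = (∇_{x₁}V(x), −∇_{x₂}V(x))`, `A(x) = (x₁ᵀs · 1, 1)` and `W(x*) = ((1/(x₁*ᵀ s)) · 1, 1)`. -/
lemma deriv1 {n₁ n₂ : ℕ} (R : Fin n₁ → Fin n₂ → ℝ) (svec : Fin n₁ → ℝ)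
    (x₁ : Fin n₁ → ℝ) (x₂ : Fin n₂ → ℝ) (i : Fin n₁)
    (hD : (∑ i', x₁ i' * svec i') ≠ 0) :
    deriv (fun t => scRatioV R svec (Function.update x₁ i t) x₂) (x₁ i)
      = ((∑ j, R i j * x₂ j) * (∑ i', x₁ i' * svec i')
          - (∑ i', ∑ j, x₁ i' * R i' j * x₂ j) * svec i) / (∑ i', x₁ i' * svec i') ^ 2 := by
  set A : ℝ := ∑ j, R i j * x₂ j with hA
  set N : ℝ := ∑ i', ∑ j, x₁ i' * R i' j * x₂ j with hN
  set D : ℝ := ∑ i', x₁ i' * svec i' with hDdef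
  have hfun : (fun t => scRatioV R svec (Function.update x₁ i t) x₂)
      = fun t => (N + (t - x₁ i) * A) / (D + (t - x₁ i) * svec i) := by
    funext t
    unfold scRatioV
    congr 1
    · have : ∀ i', ∑ j, Function.update x₁ i t i' * R i' j * x₂ j
          = Function.update x₁ i t i' * ∑ j, R i' j * x₂ j := by
        intro i'
        rw [Finset.mul_sum]
        exact Finset.sum_congr rfl fun j _ => by ring
      rw [Finset.sum_congr rfl fun i' _ => this i']
      rw [sum_update_mul x₁ (fun i' => ∑ j, R i' j * x₂ j) i t]
      congr 1
      · rw [hN]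
        exact Finset.sum_congr rfl fun i' _ => by rw [Finset.mul_sum]; exact Finset.sum_congr rfl fun j _ => by ring
    · exact sum_update_mul x₁ svec i t
  rw [hfun]
  have hnum : HasDerivAt (fun t : ℝ => N + (t - x₁ i) * A) A (x₁ i) := by
    have := ((hasDerivAt_id (x₁ i)).sub_const (x₁ i)).mul_const A
    simpa using this.const_add N
  have hden : HasDerivAt (fun t : ℝ => D + (t - x₁ i) * svec i) (svec i) (x₁ i) := by
    have := ((hasDerivAt_id (x₁ i)).sub_const (x₁ i)).mul_const (svec i)
    simpa using this.const_add D
  have hden0 : D + (x₁ i - x₁ i) * svec i ≠ 0 := by simpa using hD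
  have := (hnum.div hden hden0).deriv
  simpa [Pi.div_def] using this

lemma deriv2 {n₁ n₂ : ℕ} (R : Fin n₁ → Fin n₂ → ℝ) (svec : Fin n₁ → ℝ)
    (x₁ : Fin n₁ → ℝ) (x₂ : Fin n₂ → ℝ) (j : Fin n₂) :
    deriv (fun t => scRatioV R svec x₁ (Function.update x₂ j t)) (x₂ j)
      = (∑ i, x₁ i * R i j) / (∑ i', x₁ i' * svec i') := by
  set B : ℝ := ∑ i, x₁ i * R i j with hB
  set N : ℝ := ∑ i', ∑ j', x₁ i' * R i' j' * x₂ j' with hN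
  set D : ℝ := ∑ i', x₁ i' * svec i' with hDdef
  have hfun : (fun t => scRatioV R svec x₁ (Function.update x₂ j t))
      = fun t => (N + (t - x₂ j) * B) / D := by
    funext t
    unfold scRatioV
    congr 1
    have : ∀ i', ∑ j', x₁ i' * R i' j' * Function.update x₂ j t j'
        = (∑ j', x₁ i' * R i' j' * x₂ j') + (t - x₂ j) * (x₁ i' * R i' j) := by
      intro i'
      have := sum_update_mul x₂ (fun j' => x₁ i' * R i' j') j t
      calc ∑ j', x₁ i' * R i' j' * Function.update x₂ j t j'
          = ∑ j', Function.update x₂ j t j' * (x₁ i' * R i' j') :=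
            Finset.sum_congr rfl fun j' _ => by ring
        _ = (∑ j', x₂ j' * (x₁ i' * R i' j')) + (t - x₂ j) * (x₁ i' * R i' j) := this
        _ = (∑ j', x₁ i' * R i' j' * x₂ j') + (t - x₂ j) * (x₁ i' * R i' j) := by
            congr 1
            exact Finset.sum_congr rfl fun j' _ => by ring
    rw [Finset.sum_congr rfl fun i' _ => this i', Finset.sum_add_distrib, ← Finset.mul_sum]
  rw [hfun]
  have hnum : HasDerivAt (fun t : ℝ => N + (t - x₂ j) * B) B (x₂ j) := by
    have := ((hasDerivAt_id (x₂ j)).sub_const (x₂ j)).mul_const B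
    simpa using this.const_add N
  have := (hnum.div_const D).deriv
  simpa using this

lemma denom_pos {n : ℕ} (svec : Fin n → ℝ) (hsvec : ∀ i, 0 < svec i)
    (x : Fin n → ℝ) (hx : x ∈ stdSimplex ℝ (Fin n)) : 0 < ∑ i, x i * svec i := by
  rcases hx with ⟨hnn, hsum⟩
  by_contra h
  push_neg at h
  have hz : ∑ i, x i * svec i = 0 :=
    le_antisymm h (Finset.sum_nonneg fun i _ => mul_nonneg (hnn i) (hsvec i).le)
  have hall := (Finset.sum_eq_zero_iff_of_nonneg
    (fun i _ => mul_nonneg (hnn i) (hsvec i).le)).1 hz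
  have : ∑ i, x i = 0 := Finset.sum_eq_zero fun i _ => by
    rcases mul_eq_zero.1 (hall i (Finset.mem_univ i)) with h' | h'
    · exact h'
    · exact absurd h' (hsvec i).ne'
  rw [hsum] at this
  norm_num at this

theorem ratio_game_generalized_minty {n₁ n₂ : ℕ}
    (R : Fin n₁ → Fin n₂ → ℝ) (svec : Fin n₁ → ℝ) (hsvec : ∀ i, 0 < svec i)
    (x₁s : Fin n₁ → ℝ) (x₂s : Fin n₂ → ℝ)
    (hx₁s : x₁s ∈ stdSimplex ℝ (Fin n₁)) (hx₂s : x₂s ∈ stdSimplex ℝ (Fin n₂))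
    (hsaddle : ∀ x₁ ∈ stdSimplex ℝ (Fin n₁), ∀ x₂ ∈ stdSimplex ℝ (Fin n₂),
      scRatioV R svec x₁s x₂ ≤ scRatioV R svec x₁s x₂s ∧
      scRatioV R svec x₁s x₂s ≤ scRatioV R svec x₁ x₂s) :
    ∀ x₁ ∈ stdSimplex ℝ (Fin n₁), ∀ x₂ ∈ stdSimplex ℝ (Fin n₂),
      0 ≤ (∑ i, (x₁ i - x₁s i) *
              (deriv (fun t => scRatioV R svec (Function.update x₁ i t) x₂) (x₁ i)
                * (∑ i', x₁ i' * svec i') * (1 / (∑ i', x₁s i' * svec i'))))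
        + (∑ j, (x₂ j - x₂s j) *
              (- deriv (fun t => scRatioV R svec x₁ (Function.update x₂ j t)) (x₂ j))) := by
  intro x₁ hx₁ x₂ hx₂
  have hD : 0 < ∑ i', x₁ i' * svec i' := denom_pos svec hsvec x₁ hx₁
  have hDs : 0 < ∑ i', x₁s i' * svec i' := denom_pos svec hsvec x₁s hx₁s
  set D : ℝ := ∑ i', x₁ i' * svec i' with hDdef
  set Ds : ℝ := ∑ i', x₁s i' * svec i' with hDsdef
  set a : ℝ := ∑ i, ∑ j, x₁ i * R i j * x₂ j with ha
  set b : ℝ := ∑ i, ∑ j, x₁s i * R i j * x₂ j with hb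
  set c : ℝ := ∑ i, ∑ j, x₁ i * R i j * x₂s j with hc
  -- rewrite the derivatives
  have e1 : ∀ i, deriv (fun t => scRatioV R svec (Function.update x₁ i t) x₂) (x₁ i)
      = ((∑ j, R i j * x₂ j) * D - a * svec i) / D ^ 2 :=
    fun i => deriv1 R svec x₁ x₂ i hD.ne'
  have e2 : ∀ j, deriv (fun t => scRatioV R svec x₁ (Function.update x₂ j t)) (x₂ j)
      = (∑ i, x₁ i * R i j) / D := fun j => deriv2 R svec x₁ x₂ j
  have key : (∑ i, (x₁ i - x₁s i) *
              (deriv (fun t => scRatioV R svec (Function.update x₁ i t) x₂) (x₁ i)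
                * D * (1 / Ds)))
        + (∑ j, (x₂ j - x₂s j) *
              (- deriv (fun t => scRatioV R svec x₁ (Function.update x₂ j t)) (x₂ j)))
      = c / D - b / Ds := by
    have s1 : (∑ i, (x₁ i - x₁s i) *
              (deriv (fun t => scRatioV R svec (Function.update x₁ i t) x₂) (x₁ i)
                * D * (1 / Ds)))
        = ∑ i, ((x₁ i * (∑ j, R i j * x₂ j)) / Ds - (x₁s i * (∑ j, R i j * x₂ j)) / Ds
            - (x₁ i * svec i) * (a / (D * Ds)) + (x₁s i * svec i) * (a / (D * Ds))) := by
      refine Finset.sum_congr rfl fun i _ => ?_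
      rw [e1 i]
      field_simp
      ring
    have s2 : (∑ j, (x₂ j - x₂s j) *
              (- deriv (fun t => scRatioV R svec x₁ (Function.update x₂ j t)) (x₂ j)))
        = ∑ j, ((x₂s j * (∑ i, x₁ i * R i j)) / D - (x₂ j * (∑ i, x₁ i * R i j)) / D) := by
      refine Finset.sum_congr rfl fun j _ => ?_
      rw [e2 j]
      field_simp
      ring
    rw [s1, s2]
    have ha' : ∑ i, x₁ i * (∑ j, R i j * x₂ j) = a := by
      rw [ha]
      exact Finset.sum_congr rfl fun i _ => by
        rw [Finset.mul_sum]; exact Finset.sum_congr rfl fun j _ => by ring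
    have hb' : ∑ i, x₁s i * (∑ j, R i j * x₂ j) = b := by
      rw [hb]
      exact Finset.sum_congr rfl fun i _ => by
        rw [Finset.mul_sum]; exact Finset.sum_congr rfl fun j _ => by ring
    have ha2 : ∑ j, x₂ j * (∑ i, x₁ i * R i j) = a := by
      rw [ha, Finset.sum_comm]
      exact Finset.sum_congr rfl fun j _ => by
        rw [Finset.mul_sum]; exact Finset.sum_congr rfl fun i _ => by ring
    have hc' : ∑ j, x₂s j * (∑ i, x₁ i * R i j) = c := by
      rw [hc, Finset.sum_comm]
      exact Finset.sum_congr rfl fun j _ => by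
        rw [Finset.mul_sum]; exact Finset.sum_congr rfl fun i _ => by ring
    simp only [Finset.sum_add_distrib, Finset.sum_sub_distrib, ← Finset.sum_div,
      ← Finset.sum_mul]
    rw [ha', hb', ha2, hc', ← hDdef, ← hDsdef]
    field_simp
    ring
  rw [key]
  obtain ⟨h1, h2⟩ := hsaddle x₁ hx₁ x₂ hx₂
  have hcd : scRatioV R svec x₁ x₂s = c / D := rfl
  have hbd : scRatioV R svec x₁s x₂ = b / Ds := rfl
  rw [hcd] at h2
  rw [hbd] at h1
  linarith
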